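/- Let R be an n×n Hermitian positive semidefinite matrix and B ∈ ℂ^{n×m} of rank m. There exists Γ ∈ ℂ^{m×n} with Γ B = I_m and Γ R Γ* = 0 if and only if the m×m matrix B* P B is invertible, where P denotes the orthogonal projection onto the null space of R. -/

import Mathlib

open Matrix ComplexOrder
open scoped MatrixOrder

lemma aux_eq_zero_of_mulVec_eq_zero {n m : ℕ} {A : Matrix (Fin n) (Fin m) ℂ}
    (h : ∀ x, A *ᵥ x = 0) : A = 0 := by
  ext i j
  have := congrFun (h (Pi.single j 1)) i
  simpa [Matrix.mulVec_single] using this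

lemma aux_eq_of_mulVec_eq {n m : ℕ} {A B : Matrix (Fin n) (Fin m) ℂ}
    (h : ∀ x, A *ᵥ x = B *ᵥ x) : A = B := by
  have : A - B = 0 := aux_eq_zero_of_mulVec_eq_zero (fun x => by
    rw [Matrix.sub_mulVec, h x, sub_self])
  exact sub_eq_zero.mp this

/-- There exists `Γ` with `Γ B = I` and `Γ R Γ* = 0` iff `B* Π_{N(R)} B` is
invertible, where `P` is the orthogonal projection onto the null space of `R`. -/
theorem stmt_2 {n m : ℕ} (R : Matrix (Fin n) (Fin n) ℂ) (hR : R.PosSemidef)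
    (B : Matrix (Fin n) (Fin m) ℂ) (hB : B.rank = m)
    (P : Matrix (Fin n) (Fin n) ℂ) (hPh : P.IsHermitian) (hPP : P * P = P)
    (hPrange : ∀ x : Fin n → ℂ, R *ᵥ x = 0 ↔ P *ᵥ x = x) :
    (∃ Γ : Matrix (Fin m) (Fin n) ℂ, Γ * B = 1 ∧ Γ * R * Γᴴ = 0) ↔
      IsUnit (Bᴴ * P * B) := by
  constructor
  · rintro ⟨Γ, hΓB, hΓR⟩
    -- From Γ R Γᴴ = 0 and R psd, get R Γᴴ = 0
    have hsq : CFC.sqrt R * CFC.sqrt R = R := CFC.sqrt_mul_sqrt_self R hR.nonneg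
    have hsqH : (CFC.sqrt R)ᴴ = CFC.sqrt R := (CFC.sqrt_nonneg R).posSemidef.isHermitian
    have hsqmul : (CFC.sqrt R) * ((CFC.sqrt R) * Γᴴ) = R * Γᴴ := by
      rw [← Matrix.mul_assoc, hsq]
    have h1 : ((CFC.sqrt R) * Γᴴ)ᴴ * ((CFC.sqrt R) * Γᴴ) = 0 := by
      rw [Matrix.conjTranspose_mul, Matrix.conjTranspose_conjTranspose, hsqH]
      rw [← hΓR]
      simp only [Matrix.mul_assoc, hsqmul]
    have h2 : (CFC.sqrt R) * Γᴴ = 0 := Matrix.conjTranspose_mul_self_eq_zero.mp h1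
    have hRΓ : R * Γᴴ = 0 := by rw [← hsqmul, h2, Matrix.mul_zero]
    -- hence P Γᴴ = Γᴴ, so Γ P = Γ
    have hPΓ : P * Γᴴ = Γᴴ := by
      apply aux_eq_of_mulVec_eq
      intro x
      rw [← Matrix.mulVec_mulVec]
      apply (hPrange (Γᴴ *ᵥ x)).mp
      rw [Matrix.mulVec_mulVec, hRΓ, Matrix.zero_mulVec]
    have hΓP : Γ * P = Γ := by
      have := congrArg Matrix.conjTranspose hPΓ
      rwa [Matrix.conjTranspose_mul, Matrix.conjTranspose_conjTranspose,
        hPh.eq] at this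
    -- injectivity of BᴴPB
    rw [← Matrix.mulVec_injective_iff_isUnit]
    have hPPB : P * (P * B) = P * B := by rw [← Matrix.mul_assoc, hPP]
    have hfact : Bᴴ * P * B = (P * B)ᴴ * (P * B) := by
      rw [Matrix.conjTranspose_mul, hPh.eq]
      simp only [Matrix.mul_assoc, hPPB]
    have key : ∀ z, (Bᴴ * P * B) *ᵥ z = 0 → z = 0 := by
      intro z hz
      rw [hfact] at hz
      have h0 : star ((P * B) *ᵥ z) ⬝ᵥ ((P * B) *ᵥ z) = 0 := by
        rw [Matrix.star_mulVec, ← Matrix.dotProduct_mulVec,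
          Matrix.mulVec_mulVec, hz, dotProduct_zero]
      have hPB : (P * B) *ᵥ z = 0 := dotProduct_star_self_eq_zero.mp h0
      have h3 : (Γ * (P * B)) *ᵥ z = 0 := by
        rw [← Matrix.mulVec_mulVec, hPB, Matrix.mulVec_zero]
      rwa [← Matrix.mul_assoc, hΓP, hΓB, Matrix.one_mulVec] at h3
    intro x y hxy
    have h4 : (Bᴴ * P * B) *ᵥ (x - y) = 0 := by
      rw [Matrix.mulVec_sub, hxy, sub_self]
    exact sub_eq_zero.mp (key _ h4)
  · intro hM
    set M := Bᴴ * P * B with hMdef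
    have hRP : R * P = 0 := by
      apply aux_eq_zero_of_mulVec_eq_zero
      intro x
      rw [← Matrix.mulVec_mulVec]
      apply (hPrange (P *ᵥ x)).mpr
      rw [Matrix.mulVec_mulVec, hPP]
    refine ⟨M⁻¹ * Bᴴ * P, ?_, ?_⟩
    · rw [Matrix.mul_assoc, Matrix.mul_assoc, ← Matrix.mul_assoc Bᴴ P B, ← hMdef,
        Matrix.nonsing_inv_mul _ ((Matrix.isUnit_iff_isUnit_det _).mp hM)]
    · have hPR : P * R = 0 := by
        have := congrArg Matrix.conjTranspose hRP
        rwa [Matrix.conjTranspose_mul, hPh.eq, hR.isHermitian.eq,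
          Matrix.conjTranspose_zero] at this
      have hPRw : P * (R * (M⁻¹ * Bᴴ * P)ᴴ) = 0 := by
        rw [← Matrix.mul_assoc, hPR, Matrix.zero_mul]
      calc M⁻¹ * Bᴴ * P * R * (M⁻¹ * Bᴴ * P)ᴴ
          = M⁻¹ * (Bᴴ * (P * (R * (M⁻¹ * Bᴴ * P)ᴴ))) := by
            simp only [Matrix.mul_assoc]
        _ = 0 := by rw [hPRw, Matrix.mul_zero, Matrix.mul_zero]
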